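/- Let α_h > 0 and let T₁ be the first-order differential operator T₁ = −(α_h u² − v²)∂ᵤ − (α_h+1) u v ∂ᵥ + (1−h) u z ∂_z on the region {v ≠ 0}. Fix p, q, α, β with β = α_h p − (1−h)q and a constant c₁ > 0, and define φ(u,v,z) = (r^p z^q / (C^{-2}+1)^{β/2}) |r/v|^{β} + c₁ r^p z^q |r/v|^{β} ∫_{u/|v|}^{1/C} (t²+1)^{(α−β−1)/2} dt, where r = √(u²+v²) and C > 0. Then on {v ≠ 0}: T₁ φ = −c₁ r^{p+1} z^{q} |r/v|^{α}, and φ = r^p z^q on the surface {u = |v|/C}. -/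

import Mathlib

open Real

noncomputable def pdu (f : ℝ → ℝ → ℝ → ℝ) : ℝ → ℝ → ℝ → ℝ :=
  fun u v z => deriv (fun u' => f u' v z) u

noncomputable def pdv (f : ℝ → ℝ → ℝ → ℝ) : ℝ → ℝ → ℝ → ℝ :=
  fun u v z => deriv (fun v' => f u v' z) v

noncomputable def pdz (f : ℝ → ℝ → ℝ → ℝ) : ℝ → ℝ → ℝ → ℝ :=
  fun u v z => deriv (fun z' => f u v z') z

/-- The transport operator `T₁ = −(α_h u² − v²)∂ᵤ − (α_h+1)uv∂ᵥ + (1−h)uz∂_z`. -/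
noncomputable def T1op (h : ℝ) (f : ℝ → ℝ → ℝ → ℝ) (u v z : ℝ) : ℝ :=
  -((1/3 + 2*h/3) * u ^ 2 - v ^ 2) * pdu f u v z
    - ((1/3 + 2*h/3) + 1) * u * v * pdv f u v z
    + (1 - h) * u * z * pdz f u v z

/-- Auxiliary algebraic identity. -/
theorem final_alg (h p q α β c₁ u v z K G0 X W F Z m : ℝ) (hv : v ≠ 0) (hz : z ≠ 0)
    (hm : m ≠ 0) (hrel : β = (1/3 + 2*h/3) * p - (1 - h) * q) :
    -((1/3 + 2*h/3) * u ^ 2 - v ^ 2) *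
        ((p + β) * X * u * W * Z * (K + c₁ * G0) + X * (u ^ 2 + v ^ 2) * W * Z * (c₁ * (-F / m)))
      - ((1/3 + 2*h/3) + 1) * u * v *
        (((p + β) * X * v * W + X * (u ^ 2 + v ^ 2) * (-β * W * v / v ^ 2)) * Z * (K + c₁ * G0)
          + X * (u ^ 2 + v ^ 2) * W * Z * (c₁ * (F * (u * v) / (v ^ 2 * m))))
      + (1 - h) * u * z * (X * (u ^ 2 + v ^ 2) * W * (q * (Z / z)) * (K + c₁ * G0))
    = -(c₁ * (X * (u ^ 2 + v ^ 2) ^ 2) * Z * (F * W) / m) := by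
  rw [hrel]
  field_simp
  ring

/-- The explicit method-of-characteristics solution `φ₁` solves the transport PDE
`T₁φ = −c₁ r^{p+1} z^q |r/v|^α` with boundary data `r^p z^q` on `{u = |v|/C}`. -/
theorem solves_transport_R1 (h C p q α β c₁ : ℝ)
    (hh : h ∈ Set.Ioo (0:ℝ) 1) (hC : 0 < C)
    (hβ : 0 < β) (hβα : β < α) (hα : α < 1)
    (hrel : β = (1/3 + 2*h/3) * p - (1 - h) * q) (hc₁ : 0 < c₁)
    (φ : ℝ → ℝ → ℝ → ℝ)
    (hφ : φ = fun u v z =>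
      (Real.sqrt (u ^ 2 + v ^ 2)) ^ p * z ^ q / (1/C ^ 2 + 1) ^ (β/2)
          * |Real.sqrt (u ^ 2 + v ^ 2) / v| ^ β
        + c₁ * (Real.sqrt (u ^ 2 + v ^ 2)) ^ p * z ^ q
          * |Real.sqrt (u ^ 2 + v ^ 2) / v| ^ β
          * ∫ t in (u / |v|)..(1/C), (t ^ 2 + 1) ^ ((α - β - 1)/2)) :
    (∀ u v z : ℝ, v ≠ 0 → 0 < z →
      T1op h φ u v z =
        -c₁ * (Real.sqrt (u ^ 2 + v ^ 2)) ^ (p + 1) * z ^ q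
          * |Real.sqrt (u ^ 2 + v ^ 2) / v| ^ α) ∧
    (∀ v z : ℝ, v ≠ 0 → 0 < z →
      φ (|v| / C) v z = (Real.sqrt ((|v| / C) ^ 2 + v ^ 2)) ^ p * z ^ q) := by
  obtain ⟨hh0, hh1⟩ := hh
  set f : ℝ → ℝ := fun t => (t ^ 2 + 1) ^ ((α - β - 1)/2) with hfdef
  set G : ℝ → ℝ := fun x => ∫ t in x..(1/C), f t with hGdef
  set K : ℝ := 1 / ((1/C ^ 2 + 1) ^ (β/2)) with hKdef
  have hfc : Continuous f := by
    apply Continuous.rpow_const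
    · continuity
    · intro t; left; positivity
  have hGd : ∀ x, HasDerivAt G (-(f x)) x := by
    intro x
    have h1 : HasDerivAt (fun y => ∫ t in (1/C)..y, f t) (f x) x :=
      intervalIntegral.integral_hasDerivAt_right (hfc.intervalIntegrable _ _)
        (hfc.stronglyMeasurableAtFilter _ _) hfc.continuousAt
    have h2 : G = fun y => -∫ t in (1/C)..y, f t := by
      funext y; exact intervalIntegral.integral_symm _ _
    rw [h2]; exact h1.neg
  -- nicer closed form of φ
  have hφ' : ∀ u' v' z' : ℝ, v' ≠ 0 →
      φ u' v' z' = Real.sqrt (u' ^ 2 + v' ^ 2) ^ (p + β) * |v'| ^ (-β) * z' ^ q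
        * (K + c₁ * G (u' / |v'|)) := by
    intro u' v' z' hv'
    have hr' : 0 < Real.sqrt (u' ^ 2 + v' ^ 2) := Real.sqrt_pos.2 (by positivity)
    have hw' : 0 < |v'| := abs_pos.2 hv'
    have hX : (0:ℝ) < (1/C ^ 2 + 1) ^ (β/2) := Real.rpow_pos_of_pos (by positivity) _
    rw [hφ]
    simp only [hGdef, hfdef, hKdef]
    rw [abs_div, abs_of_nonneg (Real.sqrt_nonneg _), Real.div_rpow hr'.le hw'.le,
      Real.rpow_add hr' p β, Real.rpow_neg hw'.le]
    field_simp
  constructor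
  · -- the PDE
    intro u v z hv hz
    set r : ℝ := Real.sqrt (u ^ 2 + v ^ 2) with hrdef
    have hr : 0 < r := Real.sqrt_pos.2 (by positivity)
    have hw : 0 < |v| := abs_pos.2 hv
    have hr2 : r ^ 2 = u ^ 2 + v ^ 2 := Real.sq_sqrt (by positivity)
    -- u-derivative
    have hru : HasDerivAt (fun u' => Real.sqrt (u' ^ 2 + v ^ 2)) (u / r) u := by
      have h1 : HasDerivAt (fun u' : ℝ => u' ^ 2 + v ^ 2) (2*u) u := by
        simpa using (hasDerivAt_pow 2 u).add_const (v ^ 2)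
      have h2 := h1.sqrt (by positivity)
      convert h2 using 1
      rw [← hrdef]
      field_simp
    have hAu : HasDerivAt (fun u' => Real.sqrt (u' ^ 2 + v ^ 2) ^ (p + β))
        ((p + β) * r ^ (p + β - 2) * u) u := by
      have h2 := hru.rpow_const (p := p + β) (Or.inl hr.ne')
      convert h2 using 1
      rw [show p + β - 1 = p + β - 2 + 1 by ring, Real.rpow_add hr, Real.rpow_one]
      field_simp
    have hGu : HasDerivAt (fun u' => G (u' / |v|)) (-(f (u / |v|)) / |v|) u := by
      have h1 := (hGd (u / |v|)).comp u ((hasDerivAt_id u).div_const |v|)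
      simp only [Function.comp_def] at h1
      refine h1.congr_deriv (Eq.symm ?_)
      field_simp
    have hU : HasDerivAt (fun u' => Real.sqrt (u' ^ 2 + v ^ 2) ^ (p + β) * |v| ^ (-β) * z ^ q
        * (K + c₁ * G (u' / |v|)))
        ((p + β) * r ^ (p + β - 2) * u * |v| ^ (-β) * z ^ q * (K + c₁ * G (u / |v|))
          + r ^ (p + β) * |v| ^ (-β) * z ^ q * (c₁ * (-(f (u / |v|)) / |v|))) u := by
      exact ((hAu.mul_const (|v| ^ (-β))).mul_const (z ^ q)).mul
        ((hGu.const_mul c₁).const_add K)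
    have hpdu : pdu φ u v z = (p + β) * r ^ (p + β - 2) * u * |v| ^ (-β) * z ^ q
        * (K + c₁ * G (u / |v|))
        + r ^ (p + β) * |v| ^ (-β) * z ^ q * (c₁ * (-(f (u / |v|)) / |v|)) := by
      have heq : (fun u' => φ u' v z) = fun u' =>
          Real.sqrt (u' ^ 2 + v ^ 2) ^ (p + β) * |v| ^ (-β) * z ^ q
            * (K + c₁ * G (u' / |v|)) := funext fun u' => hφ' u' v z hv
      rw [pdu, heq]; exact hU.deriv
    -- v-derivative
    have hrv : HasDerivAt (fun v' => Real.sqrt (u ^ 2 + v' ^ 2)) (v / r) v := by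
      have h1 : HasDerivAt (fun v' : ℝ => u ^ 2 + v' ^ 2) (2*v) v := by
        simpa using ((hasDerivAt_pow 2 v).const_add (u ^ 2))
      have h2 := h1.sqrt (by positivity)
      convert h2 using 1
      rw [← hrdef]
      field_simp
    have hAv : HasDerivAt (fun v' => Real.sqrt (u ^ 2 + v' ^ 2) ^ (p + β))
        ((p + β) * r ^ (p + β - 2) * v) v := by
      have h2 := hrv.rpow_const (p := p + β) (Or.inl hr.ne')
      convert h2 using 1
      rw [show p + β - 1 = p + β - 2 + 1 by ring, Real.rpow_add hr, Real.rpow_one]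
      field_simp
    have habs : HasDerivAt (fun v' : ℝ => |v'|) (v / |v|) v := by
      have h1 : HasDerivAt (fun v' : ℝ => v' ^ 2) (2*v) v := by
        simpa using hasDerivAt_pow 2 v
      have h2 := h1.sqrt (by positivity)
      have h3 : (fun v' : ℝ => |v'|) = fun v' : ℝ => Real.sqrt (v' ^ 2) := by
        funext x; rw [Real.sqrt_sq_eq_abs]
      rw [h3]
      convert h2 using 1
      rw [Real.sqrt_sq_eq_abs]
      field_simp
    have hWv : HasDerivAt (fun v' : ℝ => |v'| ^ (-β)) (-β * |v| ^ (-β) * v / v ^ 2) v := by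
      have h2 := habs.rpow_const (p := -β) (Or.inl hw.ne')
      convert h2 using 1
      rw [show -β - 1 = -β + -1 by ring, Real.rpow_add hw, Real.rpow_neg_one, ← sq_abs v]
      field_simp
    have hIv : HasDerivAt (fun v' : ℝ => u / |v'|) (-(u * v) / |v| ^ 3) v := by
      have h2 := (hasDerivAt_const v u).fun_div habs hw.ne'
      refine h2.congr_deriv (Eq.symm ?_)
      rw [div_eq_div_iff (by positivity) (by positivity)]
      field_simp
      ring
    have hGv : HasDerivAt (fun v' => G (u / |v'|)) (f (u / |v|) * (u * v) / |v| ^ 3) v := by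
      have h1 := (hGd (u / |v|)).comp v hIv
      simp only [Function.comp_def] at h1
      refine h1.congr_deriv (Eq.symm ?_)
      field_simp
    have hV : HasDerivAt (fun v' => Real.sqrt (u ^ 2 + v' ^ 2) ^ (p + β) * |v'| ^ (-β) * z ^ q
        * (K + c₁ * G (u / |v'|)))
        (((p + β) * r ^ (p + β - 2) * v * |v| ^ (-β)
            + r ^ (p + β) * (-β * |v| ^ (-β) * v / v ^ 2)) * z ^ q * (K + c₁ * G (u / |v|))
          + r ^ (p + β) * |v| ^ (-β) * z ^ q * (c₁ * (f (u / |v|) * (u * v) / |v| ^ 3))) v := by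
      exact (((hAv.mul hWv).mul_const (z ^ q)).mul ((hGv.const_mul c₁).const_add K))
    have hpdv : pdv φ u v z = ((p + β) * r ^ (p + β - 2) * v * |v| ^ (-β)
            + r ^ (p + β) * (-β * |v| ^ (-β) * v / v ^ 2)) * z ^ q * (K + c₁ * G (u / |v|))
          + r ^ (p + β) * |v| ^ (-β) * z ^ q * (c₁ * (f (u / |v|) * (u * v) / |v| ^ 3)) := by
      have hev : (fun v' => φ u v' z) =ᶠ[nhds v] fun v' =>
          Real.sqrt (u ^ 2 + v' ^ 2) ^ (p + β) * |v'| ^ (-β) * z ^ q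
            * (K + c₁ * G (u / |v'|)) := by
        filter_upwards [eventually_ne_nhds hv] with v' hv' using hφ' u v' z hv'
      rw [pdv, hev.deriv_eq]; exact hV.deriv
    -- z-derivative
    have hZ : HasDerivAt (fun z' : ℝ => Real.sqrt (u ^ 2 + v ^ 2) ^ (p + β) * |v| ^ (-β) * z' ^ q
        * (K + c₁ * G (u / |v|)))
        (r ^ (p + β) * |v| ^ (-β) * (q * z ^ (q - 1)) * (K + c₁ * G (u / |v|))) z := by
      have h1 := (hasDerivAt_rpow_const (x := z) (p := q) (Or.inl hz.ne')).const_mul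
        (r ^ (p + β) * |v| ^ (-β))
      have h2 := h1.mul_const (K + c₁ * G (u / |v|))
      convert h2 using 2 <;> rw [hrdef] <;> ring
    have hpdz : pdz φ u v z = r ^ (p + β) * |v| ^ (-β) * (q * z ^ (q - 1))
        * (K + c₁ * G (u / |v|)) := by
      have heq : (fun z' => φ u v z') = fun z' =>
          Real.sqrt (u ^ 2 + v ^ 2) ^ (p + β) * |v| ^ (-β) * z' ^ q
            * (K + c₁ * G (u / |v|)) := funext fun z' => hφ' u v z' hv
      rw [pdz, heq]; exact hZ.deriv
    -- now the algebra
    rw [T1op, hpdu, hpdv, hpdz]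
    have R1 : r ^ (p + β) = r ^ (p + β - 2) * (u ^ 2 + v ^ 2) := by
      rw [← hr2, ← Real.rpow_natCast r 2, ← Real.rpow_add hr]
      congr 1; push_cast; ring
    have R2 : z ^ (q - 1) = z ^ q / z := by
      rw [Real.rpow_sub hz, Real.rpow_one]
    have R4 : f (u / |v|) = (r / |v|) ^ (α - β - 1) := by
      have e1 : (u / |v|) ^ 2 + 1 = (r / |v|) ^ 2 := by
        rw [div_pow, div_pow, hr2, sq_abs]
        field_simp
      simp only [hfdef]
      rw [e1, ← Real.rpow_natCast (r / |v|) 2, ← Real.rpow_mul (by positivity)]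
      congr 1; push_cast; ring
    have R5 : |r / v| = r / |v| := by
      rw [abs_div, abs_of_nonneg hr.le]
    have hrw : (0:ℝ) < r / |v| := by positivity
    have k1 : (r / |v|) ^ (α - β - 1) * (r / |v|) ^ β * (r / |v|) = (r / |v|) ^ α := by
      rw [← Real.rpow_add hrw, ← Real.rpow_add_one hrw.ne']
      congr 1; ring
    have k2 : (r / |v|) ^ β = r ^ β * |v| ^ (-β) := by
      rw [Real.div_rpow hr.le hw.le, Real.rpow_neg hw.le, div_eq_mul_inv]
    have k3 : r ^ (p + 1) * r ^ β * r = r ^ (p + β - 2) * (u ^ 2 + v ^ 2) ^ 2 := by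
      rw [← Real.rpow_add hr, ← Real.rpow_add_one hr.ne', ← hr2, ← pow_mul,
        ← Real.rpow_natCast r (2 * 2), ← Real.rpow_add hr]
      congr 1; push_cast; ring
    have keyR : -c₁ * r ^ (p + 1) * z ^ q * (r / |v|) ^ α
        = -(c₁ * (r ^ (p + β - 2) * (u ^ 2 + v ^ 2) ^ 2) * z ^ q
            * ((r / |v|) ^ (α - β - 1) * |v| ^ (-β)) / |v|) := by
      calc -c₁ * r ^ (p + 1) * z ^ q * (r / |v|) ^ α
          = -(c₁ * (r ^ (p + 1) * r ^ β * r) * z ^ q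
              * ((r / |v|) ^ (α - β - 1) * |v| ^ (-β)) / |v|) := by
            rw [← k1, k2]; ring
        _ = _ := by rw [k3]
    have h3 : |v| ^ 3 = v ^ 2 * |v| := by rw [← sq_abs v]; ring
    rw [R5, keyR, R1, R2, R4, h3]
    apply final_alg h p q α β c₁ u v z K (G (u / |v|)) (r ^ (p + β - 2))
      (|v| ^ (-β)) ((r / |v|) ^ (α - β - 1)) (z ^ q) |v| hv hz.ne' hw.ne' hrel
  · -- boundary condition
    intro v z hv hz
    have hw : 0 < |v| := abs_pos.2 hv
    have hXpos : (0:ℝ) < 1/C ^ 2 + 1 := by positivity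
    rw [hφ]
    simp only
    have e0 : |v| / C / |v| = 1 / C := by field_simp
    rw [e0, intervalIntegral.integral_same]
    have e1 : |Real.sqrt ((|v| / C) ^ 2 + v ^ 2) / v| = Real.sqrt (1/C ^ 2 + 1) := by
      rw [abs_div, abs_of_nonneg (Real.sqrt_nonneg _)]
      rw [show |v| = Real.sqrt (v ^ 2) from (Real.sqrt_sq_eq_abs v).symm]
      rw [← Real.sqrt_div (by positivity)]
      congr 1
      field_simp [sq_abs, Real.sq_sqrt (sq_nonneg v)]
      ring
      rw [Real.sq_sqrt (sq_nonneg v)]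
      ring
    have e2 : Real.sqrt (1/C ^ 2 + 1) ^ β = (1/C ^ 2 + 1) ^ (β/2) := by
      rw [Real.sqrt_eq_rpow, ← Real.rpow_mul hXpos.le]
      congr 1; ring
    have hXb : (1/C ^ 2 + 1 : ℝ) ^ (β/2) ≠ 0 := (Real.rpow_pos_of_pos hXpos _).ne'
    rw [e1, e2, mul_zero, add_zero, div_mul_cancel₀ _ hXb]
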